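/- Consider the model on n nodes where each node is independently 'active' with probability √p (0 < p ≤ 1), and the output graph is the complete graph on active nodes. Then each edge appears with probability p, the overlap equals p, and the expected triangle count is C(n,3)·p^{3/2}; hence the node independent triangle bound (1/6)n³·Ov^{3/2} is tight up to constant factors. -/

import Mathlib

open MeasureTheory

lemma sum_range_id_eq_choose (N : ℕ) : ∑ m ∈ Finset.range N, m = N.choose 2 := by
  induction N with
  | zero => simp
  | succ N ih => rw [Finset.sum_range_succ, ih, Nat.choose_succ_succ, Nat.choose_one_right, Nat.add_comm]

lemma sum_range_choose_two_eq (N : ℕ) : ∑ m ∈ Finset.range N, m.choose 2 = N.choose 3 := by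
  induction N with
  | zero => simp
  | succ N ih =>
    rw [Finset.sum_range_succ, ih, show (3:ℕ) = 2 + 1 from rfl, Nat.choose_succ_succ, Nat.add_comm]

def cyl (n : ℕ) (T : Finset (Fin n)) : Set (Fin n → Bool) := {ω | ∀ i ∈ T, ω i = true}

lemma cyl_eq_pi (n : ℕ) (T : Finset (Fin n)) :
    cyl n T = Set.univ.pi (fun k => if k ∈ T then ({true} : Set Bool) else Set.univ) := by
  ext ω
  simp only [cyl, Set.mem_setOf_eq, Set.mem_pi, Set.mem_univ, forall_true_left]
  constructor
  · intro h k
    by_cases hk : k ∈ T <;> simp [hk, h k]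
  · intro h i hi
    have := h i
    simpa [hi] using this

lemma cyl_measurable (n : ℕ) (T : Finset (Fin n)) : MeasurableSet (cyl n T) := by
  rw [cyl_eq_pi]
  exact MeasurableSet.univ_pi fun k => by
    by_cases h : k ∈ T <;> simp [h]

noncomputable def nu (p : ℝ) : Measure Bool :=
  ENNReal.ofReal (Real.sqrt p) • Measure.dirac true +
    ENNReal.ofReal (1 - Real.sqrt p) • Measure.dirac false

lemma nu_true (p : ℝ) : nu p {true} = ENNReal.ofReal (Real.sqrt p) := by
  simp [nu, Measure.dirac_apply]

lemma nu_univ (p : ℝ) (hp : 0 ≤ p) (hp1 : p ≤ 1) : nu p Set.univ = 1 := by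
  have h1 : Real.sqrt p ≤ 1 := Real.sqrt_le_one.mpr hp1
  simp only [nu, Measure.coe_add, Measure.coe_smul, Pi.add_apply, Pi.smul_apply,
    measure_univ, smul_eq_mul, mul_one]
  rw [← ENNReal.ofReal_add (Real.sqrt_nonneg p) (by linarith), add_sub_cancel,
    ENNReal.ofReal_one]

lemma nu_prob (p : ℝ) (hp : 0 ≤ p) (hp1 : p ≤ 1) : IsProbabilityMeasure (nu p) :=
  ⟨nu_univ p hp hp1⟩

lemma pi_cyl (p : ℝ) (hp : 0 ≤ p) (hp1 : p ≤ 1) (n : ℕ) (T : Finset (Fin n)) :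
    Measure.pi (fun _ : Fin n => nu p) (cyl n T) =
      ENNReal.ofReal (Real.sqrt p) ^ T.card := by
  haveI := nu_prob p hp hp1
  rw [cyl_eq_pi, Measure.pi_pi]
  have h : ∀ k : Fin n, (nu p) (if k ∈ T then ({true} : Set Bool) else Set.univ) =
      if k ∈ T then ENNReal.ofReal (Real.sqrt p) else 1 := by
    intro k
    by_cases hk : k ∈ T
    · simp [hk, nu_true]
    · simp only [hk, if_false]; exact nu_univ p hp hp1
  simp_rw [h]
  rw [Finset.prod_ite_mem, Finset.univ_inter, Finset.prod_const]

lemma inner_lt_sum {n : ℕ} (c : ℝ) (j : Fin n) :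
    ∑ i : Fin n, (if i < j then c else 0) = (j : ℕ) * c := by
  classical
  rw [Finset.sum_ite, Finset.sum_const_zero, add_zero, Finset.sum_const]
  have : Finset.univ.filter (fun i => i < j) = Finset.Iio j := by
    ext x; simp
  rw [this, Fin.card_Iio, nsmul_eq_mul]

lemma key2 {n : ℕ} (c : ℝ) :
    ∑ i : Fin n, ∑ j : Fin n, (if i < j then c else 0) = (n.choose 2 : ℝ) * c := by
  rw [Finset.sum_comm]
  simp_rw [inner_lt_sum]
  rw [← Finset.sum_mul]
  congr 1
  rw [← Nat.cast_sum]
  norm_cast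
  rw [Fin.sum_univ_eq_sum_range (fun i => i) n, sum_range_id_eq_choose]

lemma key3 {n : ℕ} (c : ℝ) :
    ∑ i : Fin n, ∑ j : Fin n, ∑ k : Fin n, (if i < j ∧ j < k then c else 0) =
      (n.choose 3 : ℝ) * c := by
  classical
  have hswap : ∑ i : Fin n, ∑ j : Fin n, ∑ k : Fin n, (if i < j ∧ j < k then c else 0) =
      ∑ k : Fin n, ∑ i : Fin n, ∑ j : Fin n, (if i < j ∧ j < k then c else 0) :=
    calc ∑ i : Fin n, ∑ j : Fin n, ∑ k : Fin n, (if i < j ∧ j < k then c else 0)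
        = ∑ i : Fin n, ∑ k : Fin n, ∑ j : Fin n, (if i < j ∧ j < k then c else 0) :=
          Finset.sum_congr rfl fun i _ => Finset.sum_comm
      _ = ∑ k : Fin n, ∑ i : Fin n, ∑ j : Fin n, (if i < j ∧ j < k then c else 0) :=
          Finset.sum_comm
  rw [hswap]
  have hinner : ∀ k : Fin n, ∑ i : Fin n, ∑ j : Fin n, (if i < j ∧ j < k then c else 0) =
      ((k : ℕ).choose 2 : ℝ) * c := by
    intro k
    rw [Finset.sum_comm]
    have h1 : ∀ j : Fin n, ∑ i : Fin n, (if i < j ∧ j < k then c else 0) =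
        if j < k then ((j : ℕ) : ℝ) * c else 0 := by
      intro j
      by_cases hjk : j < k
      · simp only [hjk, and_true, if_true]
        exact inner_lt_sum c j
      · simp [hjk]
    simp_rw [h1]
    rw [Finset.sum_ite, Finset.sum_const_zero, add_zero]
    have : Finset.univ.filter (fun j => j < k) = Finset.Iio k := by ext x; simp
    rw [this]
    calc ∑ x ∈ Finset.Iio k, ((x : ℕ) : ℝ) * c
        = ∑ m ∈ (Finset.Iio k).map Fin.valEmbedding, ((m : ℕ) : ℝ) * c :=
          (Finset.sum_map (Finset.Iio k) Fin.valEmbedding (fun m => ((m : ℕ) : ℝ) * c)).symm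
      _ = ∑ m ∈ Finset.range (k : ℕ), ((m : ℕ) : ℝ) * c := by
          rw [Fin.map_valEmbedding_Iio, Nat.Iio_eq_range]
      _ = ((k : ℕ).choose 2 : ℝ) * c := by
          rw [← Finset.sum_mul]
          congr 1
          rw [← Nat.cast_sum]
          norm_cast
          exact sum_range_id_eq_choose _
  simp_rw [hinner]
  rw [← Finset.sum_mul]
  congr 1
  rw [← Nat.cast_sum]
  norm_cast
  rw [Fin.sum_univ_eq_sum_range (fun i => (i.choose 2)) n]
  · exact sum_range_choose_two_eq n
open MeasureTheory Classical in
theorem active_nodes_overlap_and_triangles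
    (n : ℕ) (hn : 2 ≤ n) (p : ℝ) (hp : 0 < p) (hp1 : p ≤ 1)
    (μ : Measure (Fin n → Bool))
    (hμ : μ = Measure.pi (fun _ : Fin n =>
      ENNReal.ofReal (Real.sqrt p) • Measure.dirac true +
        ENNReal.ofReal (1 - Real.sqrt p) • Measure.dirac false))
    (A : (Fin n → Bool) → Fin n → Fin n → ℝ)
    (hA : ∀ ω i j, A ω i j = if i ≠ j ∧ ω i = true ∧ ω j = true then 1 else 0) :
    (∀ i j : Fin n, i ≠ j → (∫ ω, A ω i j ∂μ) = p) ∧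
    (∑ i : Fin n, ∑ j : Fin n,
          if i < j then ∫ q, A q.1 i j * A q.2 i j ∂(μ.prod μ) else 0) /
        (∑ i : Fin n, ∑ j : Fin n, if i < j then ∫ ω, A ω i j ∂μ else 0) = p ∧
    (∫ ω, ∑ i : Fin n, ∑ j : Fin n, ∑ k : Fin n,
        (if i < j ∧ j < k then A ω i j * A ω j k * A ω i k else 0) ∂μ) =
      (n.choose 3 : ℝ) * p * Real.sqrt p := by
  have hs0 : (0:ℝ) ≤ Real.sqrt p := Real.sqrt_nonneg p
  have hμν : μ = Measure.pi (fun _ : Fin n => nu p) := hμ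
  haveI : IsProbabilityMeasure (nu p) := nu_prob p hp.le hp1
  haveI : IsProbabilityMeasure μ := by
    rw [hμν]; infer_instance
  -- measure of cylinders, as real numbers
  have hcyl : ∀ T : Finset (Fin n), (μ (cyl n T)).toReal = Real.sqrt p ^ T.card := by
    intro T
    rw [hμν, pi_cyl p hp.le hp1 n T, ENNReal.toReal_pow, ENNReal.toReal_ofReal hs0]
  -- pointwise indicator form of A
  have hAind : ∀ (i j : Fin n), i ≠ j → ∀ ω, A ω i j = (cyl n {i, j}).indicator 1 ω := by
    intro i j hij ω
    rw [hA]
    by_cases h1 : ω i = true <;> by_cases h2 : ω j = true <;>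
      simp [Set.indicator_apply, cyl, hij, h1, h2]
  -- edge probability
  have hedge : ∀ i j : Fin n, i ≠ j → (∫ ω, A ω i j ∂μ) = p := by
    intro i j hij
    simp_rw [hAind i j hij]
    rw [integral_indicator_one (cyl_measurable n {i, j}), measureReal_def, hcyl, Finset.card_pair hij,
      Real.sq_sqrt hp.le]
  -- overlap numerator per edge
  have hprod : ∀ i j : Fin n, i ≠ j →
      (∫ q, A q.1 i j * A q.2 i j ∂(μ.prod μ)) = p * p := by
    intro i j hij
    have hpt : ∀ q : (Fin n → Bool) × (Fin n → Bool),
        A q.1 i j * A q.2 i j = ((cyl n {i, j}) ×ˢ (cyl n {i, j})).indicator 1 q := by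
      intro q
      rw [hAind i j hij, hAind i j hij]
      by_cases h1 : q.1 ∈ cyl n {i, j} <;> by_cases h2 : q.2 ∈ cyl n {i, j} <;>
        simp [Set.indicator_apply, Set.mem_prod, h1, h2]
    simp_rw [hpt]
    rw [integral_indicator_one (((cyl_measurable n {i, j})).prod (cyl_measurable n {i, j})), measureReal_def,
      Measure.prod_prod, ENNReal.toReal_mul, hcyl, Finset.card_pair hij, Real.sq_sqrt hp.le]
  -- triangle probability per triple
  have htri : ∀ i j k : Fin n,
      (∫ ω, (if i < j ∧ j < k then A ω i j * A ω j k * A ω i k else 0) ∂μ) =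
        if i < j ∧ j < k then p * Real.sqrt p else 0 := by
    intro i j k
    by_cases h : i < j ∧ j < k
    · obtain ⟨h1, h2⟩ := h
      have hij : i ≠ j := ne_of_lt h1
      have hjk : j ≠ k := ne_of_lt h2
      have hik : i ≠ k := ne_of_lt (h1.trans h2)
      simp only [h1, h2, and_self, if_true]
      have hpt : ∀ ω, A ω i j * A ω j k * A ω i k = (cyl n {i, j, k}).indicator 1 ω := by
        intro ω
        rw [hA, hA, hA]
        by_cases e1 : ω i = true <;> by_cases e2 : ω j = true <;> by_cases e3 : ω k = true <;>
          simp [Set.indicator_apply, cyl, hij, hjk, hik, e1, e2, e3]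
      simp_rw [hpt]
      rw [integral_indicator_one (cyl_measurable n {i, j, k}), measureReal_def, hcyl]
      have hc : ({i, j, k} : Finset (Fin n)).card = 3 := by
        rw [Finset.card_insert_of_notMem (by simp [hij, hik]), Finset.card_pair hjk]
      rw [hc, pow_succ, Real.sq_sqrt hp.le]
    · simp [h]
  refine ⟨hedge, ?_, ?_⟩
  · -- overlap
    have hnum : ∀ i j : Fin n,
        (if i < j then ∫ q, A q.1 i j * A q.2 i j ∂(μ.prod μ) else 0) =
          if i < j then p * p else 0 := by
      intro i j
      by_cases h : i < j
      · simp only [h, if_true]; exact hprod i j (ne_of_lt h)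
      · simp [h]
    have hden : ∀ i j : Fin n,
        (if i < j then ∫ ω, A ω i j ∂μ else 0) = if i < j then p else 0 := by
      intro i j
      by_cases h : i < j
      · simp only [h, if_true]; exact hedge i j (ne_of_lt h)
      · simp [h]
    simp_rw [hnum, hden, key2]
    have hC : ((n.choose 2 : ℕ) : ℝ) ≠ 0 := by
      have := Nat.choose_pos hn
      positivity
    field_simp
  · -- triangles
    calc (∫ ω, ∑ i : Fin n, ∑ j : Fin n, ∑ k : Fin n,
          (if i < j ∧ j < k then A ω i j * A ω j k * A ω i k else 0) ∂μ)
        = ∑ i : Fin n, ∫ ω, ∑ j : Fin n, ∑ k : Fin n,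
            (if i < j ∧ j < k then A ω i j * A ω j k * A ω i k else 0) ∂μ :=
          integral_finset_sum _ (fun _ _ => .of_finite)
      _ = ∑ i : Fin n, ∑ j : Fin n, ∫ ω, ∑ k : Fin n,
            (if i < j ∧ j < k then A ω i j * A ω j k * A ω i k else 0) ∂μ :=
          Finset.sum_congr rfl fun i _ => integral_finset_sum _ (fun _ _ => .of_finite)
      _ = ∑ i : Fin n, ∑ j : Fin n, ∑ k : Fin n, ∫ ω,
            (if i < j ∧ j < k then A ω i j * A ω j k * A ω i k else 0) ∂μ :=
          Finset.sum_congr rfl fun i _ => Finset.sum_congr rfl fun j _ =>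
            integral_finset_sum _ (fun _ _ => .of_finite)
      _ = ∑ i : Fin n, ∑ j : Fin n, ∑ k : Fin n,
            (if i < j ∧ j < k then p * Real.sqrt p else 0) := by
          simp_rw [htri]
      _ = (n.choose 3 : ℝ) * (p * Real.sqrt p) := key3 _
      _ = (n.choose 3 : ℝ) * p * Real.sqrt p := by ring
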